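/- Lemma (small-ball property survives truncation). Suppose c > 0 is such that P(|⟨θ, v⟩| ≤ s) ≤ c·s for every unit vector θ ∈ ℝ^k and every s > 0, and suppose E‖v‖² ≤ (11/10)·k. Define the truncated vector ω := min{1, √k/‖v‖}·v (with ω := 0 on the event v = 0). Then for every unit vector θ ∈ ℝ^k and every t > 0 with c·t ≤ 1: P(|⟨θ, ω⟩| ≤ t) ≤ (21/10)·(c·t)^{2/3}. -/
import Mathlib


/- Small-ball property of truncated random vectors, used in the proof of Lemma 3.4 of
"Long-time accuracy of ensemble Kalman filters". -/

open MeasureTheory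
open scoped RealInnerProductSpace ENNReal

noncomputable section

namespace EnKF

/-- **Small-ball property survives truncation.** If the random vector `v` on `ℝᵏ`
satisfies the small-ball estimate `P(|⟪θ, v⟫| ≤ s) ≤ c s` for all unit vectors `θ` and
all `s > 0`, and `E‖v‖² ≤ (11/10) k`, then the truncated vector
`ω = min{1, √k/‖v‖} v` satisfies `P(|⟪θ, ω⟫| ≤ t) ≤ (21/10) (c t)^(2/3)` for all unit
vectors `θ` and all `t > 0` with `c t ≤ 1`. -/
theorem small_ball_truncation {k : ℕ} (hk : 1 ≤ k)
    (Ω : Type*) [MeasurableSpace Ω] (μ : Measure Ω) [IsProbabilityMeasure μ]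
    (v : Ω → EuclideanSpace ℝ (Fin k)) (hv : Measurable v)
    (c : ℝ) (hc : 0 < c)
    (hSmallBall : ∀ θ : EuclideanSpace ℝ (Fin k), ‖θ‖ = 1 → ∀ s : ℝ, 0 < s →
      μ {ω | |⟪θ, v ω⟫| ≤ s} ≤ ENNReal.ofReal (c * s))
    (hMoment : ∫⁻ ω, ENNReal.ofReal (‖v ω‖ ^ 2) ∂μ ≤ ENNReal.ofReal ((11 / 10) * k)) :
    ∀ θ : EuclideanSpace ℝ (Fin k), ‖θ‖ = 1 → ∀ t : ℝ, 0 < t → c * t ≤ 1 →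
      μ {ω | |⟪θ, min 1 (Real.sqrt k / ‖v ω‖) • v ω⟫| ≤ t}
        ≤ ENNReal.ofReal ((21 / 10) * (c * t) ^ ((2 : ℝ) / 3)) := by

  intro θ hθ t ht hct
  set u := c * t with hu_def
  have hu : 0 < u := mul_pos hc ht
  have hkpos : (0:ℝ) < k := by exact_mod_cast hk
  have hsk : 0 < Real.sqrt k := Real.sqrt_pos.2 hkpos
  set r := u ^ (-(1:ℝ)/3) with hr_def
  have hr : 0 < r := Real.rpow_pos_of_pos hu _
  have hr1 : 1 ≤ r := Real.one_le_rpow_of_pos_of_le_one_of_nonpos hu hct (by norm_num)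
  have hur : u * r = u ^ ((2:ℝ)/3) := by
    rw [show (2:ℝ)/3 = 1 + (-(1:ℝ)/3) by norm_num, Real.rpow_add hu, Real.rpow_one]
  have ha : 0 < u ^ ((2:ℝ)/3) := Real.rpow_pos_of_pos hu _
  -- set inclusion
  have hsub : {ω | |⟪θ, min 1 (Real.sqrt k / ‖v ω‖) • v ω⟫| ≤ t}
      ⊆ {ω | Real.sqrt k * r < ‖v ω‖} ∪ {ω | |⟪θ, v ω⟫| ≤ t * r} := by
    intro ω hω
    by_cases hbig : Real.sqrt k * r < ‖v ω‖
    · exact Or.inl hbig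
    · right
      push_neg at hbig
      by_cases hv0 : v ω = 0
      · simp only [Set.mem_setOf_eq, hv0, inner_zero_right, abs_zero]
        positivity
      · have hnv : 0 < ‖v ω‖ := norm_pos_iff.2 hv0
        set m := min 1 (Real.sqrt k / ‖v ω‖) with hm_def
        have hm : r⁻¹ ≤ m := by
          apply le_min
          · exact inv_le_one_of_one_le₀ hr1
          · calc r⁻¹ = Real.sqrt k / (Real.sqrt k * r) := by
                  field_simp
              _ ≤ Real.sqrt k / ‖v ω‖ := by
                  apply div_le_div_of_nonneg_left hsk.le hnv hbig
        have hm0 : 0 < m := lt_of_lt_of_le (by positivity) hm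
        have h1 : |⟪θ, m • v ω⟫| = m * |⟪θ, v ω⟫| := by
          rw [real_inner_smul_right, abs_mul, abs_of_pos hm0]
        have h2 : m * |⟪θ, v ω⟫| ≤ t := by rw [← h1]; exact hω
        have h3 : r⁻¹ * |⟪θ, v ω⟫| ≤ t :=
          le_trans (mul_le_mul_of_nonneg_right hm (abs_nonneg _)) h2
        have : |⟪θ, v ω⟫| ≤ t * r := by
          rw [inv_mul_le_iff₀ hr] at h3
          linarith [h3]
        exact this
  calc μ {ω | |⟪θ, min 1 (Real.sqrt k / ‖v ω‖) • v ω⟫| ≤ t}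
      ≤ μ ({ω | Real.sqrt k * r < ‖v ω‖} ∪ {ω | |⟪θ, v ω⟫| ≤ t * r}) := measure_mono hsub
    _ ≤ μ {ω | Real.sqrt k * r < ‖v ω‖} + μ {ω | |⟪θ, v ω⟫| ≤ t * r} := measure_union_le _ _
    _ ≤ ENNReal.ofReal ((11/10) * u ^ ((2:ℝ)/3)) + ENNReal.ofReal (u ^ ((2:ℝ)/3)) := by
        gcongr
        · -- Markov
          have hmeas : AEMeasurable (fun ω => ENNReal.ofReal (‖v ω‖ ^ 2)) μ :=
            ((hv.norm.pow_const 2).ennreal_ofReal).aemeasurable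
          have hRpos : (0:ℝ) < (Real.sqrt k * r) ^ 2 := by positivity
          have hsub2 : {ω | Real.sqrt k * r < ‖v ω‖}
              ⊆ {ω | ENNReal.ofReal ((Real.sqrt k * r) ^ 2) ≤ ENNReal.ofReal (‖v ω‖ ^ 2)} := by
            intro ω hω
            have hω' : Real.sqrt k * r < ‖v ω‖ := hω
            exact ENNReal.ofReal_le_ofReal (pow_le_pow_left₀ (by positivity) hω'.le 2)
          calc μ {ω | Real.sqrt k * r < ‖v ω‖}
              ≤ μ {ω | ENNReal.ofReal ((Real.sqrt k * r) ^ 2) ≤ ENNReal.ofReal (‖v ω‖ ^ 2)} :=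
                measure_mono hsub2
            _ ≤ (∫⁻ ω, ENNReal.ofReal (‖v ω‖ ^ 2) ∂μ) / ENNReal.ofReal ((Real.sqrt k * r) ^ 2) :=
                meas_ge_le_lintegral_div hmeas (by simp [ENNReal.ofReal_pos.2 hRpos, ne_of_gt])
                  ENNReal.ofReal_ne_top
            _ ≤ ENNReal.ofReal ((11/10) * k) / ENNReal.ofReal ((Real.sqrt k * r) ^ 2) :=
                ENNReal.div_le_div_right hMoment _
            _ = ENNReal.ofReal ((11/10) * k / (Real.sqrt k * r) ^ 2) :=
                (ENNReal.ofReal_div_of_pos hRpos).symm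
            _ ≤ ENNReal.ofReal ((11/10) * u ^ ((2:ℝ)/3)) := by
                apply ENNReal.ofReal_le_ofReal
                have hr2 : r ^ 2 = u ^ (-(2:ℝ)/3) := by
                  rw [hr_def, ← Real.rpow_natCast (u ^ (-(1:ℝ)/3)) 2,
                    ← Real.rpow_mul hu.le]
                  norm_num
                have hminv : u ^ ((2:ℝ)/3) * u ^ (-(2:ℝ)/3) = 1 := by
                  rw [← Real.rpow_add hu]; norm_num
                have heq : (11:ℝ)/10 * u ^ ((2:ℝ)/3) * ((k:ℝ) * u ^ (-(2:ℝ)/3))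
                    = 11/10 * (k:ℝ) := by
                  rw [show (11:ℝ)/10 * u ^ ((2:ℝ)/3) * ((k:ℝ) * u ^ (-(2:ℝ)/3))
                      = 11/10 * (k:ℝ) * (u ^ ((2:ℝ)/3) * u ^ (-(2:ℝ)/3)) by ring, hminv, mul_one]
                rw [mul_pow, Real.sq_sqrt hkpos.le, hr2, div_le_iff₀ (by positivity), heq]
        · calc μ {ω | |⟪θ, v ω⟫| ≤ t * r}
              ≤ ENNReal.ofReal (c * (t * r)) := hSmallBall θ hθ (t * r) (by positivity)
            _ = ENNReal.ofReal (u ^ ((2:ℝ)/3)) := by rw [show c * (t * r) = u * r by rw [hu_def]; ring, hur]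
    _ = ENNReal.ofReal ((21/10) * u ^ ((2:ℝ)/3)) := by
        rw [← ENNReal.ofReal_add (by positivity) (by positivity)]
        congr 1; ring
    _ = ENNReal.ofReal ((21 / 10) * (c * t) ^ ((2 : ℝ) / 3)) := by rw [hu_def]


end EnKF
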